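/- Let D be a nonempty compact convex subset of ℝ^{d×m}, let F : ℝ^{d×m} → ℝ be convex and differentiable, let C_F ≥ 0 be a curvature bound for F on D, and let δ ≥ 0. Let (W^t)_{t≥0} be a D-valued stochastic process with W⁰ ∈ D deterministic and, for each t ≥ 0, W^{t+1} = W^t + γ^t (Ŝ^t − W^t) with step size γ^t = 2/(t+2), where Ŝ^t is a D-valued random matrix whose conditional expectation given W^t satisfies ⟨E[Ŝ^t | W^t], ∇F(W^t)⟩ ≤ min_{S ∈ D} ⟨S, ∇F(W^t)⟩ + (1/2) δ γ^t C_F. Then for every t ≥ 1, E[F(W^t)] − F(W*) ≤ (2 C_F / (t+2)) (1 + δ), where W* is any minimizer of F over D. -/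

import Mathlib

open Matrix MeasureTheory ProbabilityTheory

attribute [local instance] Matrix.frobeniusNormedAddCommGroup Matrix.frobeniusNormedSpace

noncomputable section

/-- The Frobenius inner product `⟨A, B⟩ = trace (Aᵀ * B)` on `ℝ^{d×m}`. -/
def frobInner {d m : ℕ} (A B : Matrix (Fin d) (Fin m) ℝ) : ℝ := (Aᵀ * B).trace

/-- The Frobenius norm `‖A‖_F = √⟨A, A⟩`. -/
def frobNorm {d m : ℕ} (A : Matrix (Fin d) (Fin m) ℝ) : ℝ := Real.sqrt (frobInner A A)

/-- `C` is a curvature bound for a differentiable `F` (with gradient `gradF`) on a convex set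
`D` if `F(W + γ(S − W)) ≤ F(W) + γ⟨S − W, ∇F(W)⟩ + (γ²/2) C` for all `W, S ∈ D`, `γ ∈ [0,1]`. -/
def IsCurvatureBound {d m : ℕ} (F : Matrix (Fin d) (Fin m) ℝ → ℝ)
    (gradF : Matrix (Fin d) (Fin m) ℝ → Matrix (Fin d) (Fin m) ℝ)
    (D : Set (Matrix (Fin d) (Fin m) ℝ)) (C : ℝ) : Prop :=
  ∀ W ∈ D, ∀ S ∈ D, ∀ γ : ℝ, γ ∈ Set.Icc (0 : ℝ) 1 →
    F (W + γ • (S - W)) ≤ F W + γ * frobInner (S - W) (gradF W) + γ ^ 2 / 2 * C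

/-- The singular values of a rectangular real matrix `A`: square roots of the
eigenvalues of `Aᵀ A` (listed with multiplicity, indexed by `Fin m`). -/
def singularValues {d m : ℕ} (A : Matrix (Fin d) (Fin m) ℝ) : Fin m → ℝ := fun i =>
  Real.sqrt ((Matrix.isHermitian_conjTranspose_mul_self A).eigenvalues i)

/-- The trace norm (nuclear norm): the sum of the singular values. -/
def traceNorm {d m : ℕ} (A : Matrix (Fin d) (Fin m) ℝ) : ℝ := ∑ i, singularValues A i

/-- The largest singular value, `σ₁(A) = sup { uᵀ A v : ‖u‖₂ = ‖v‖₂ = 1 }`. -/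
def sigma1 {d m : ℕ} (A : Matrix (Fin d) (Fin m) ℝ) : ℝ :=
  sSup {r : ℝ | ∃ (u : Fin d → ℝ) (v : Fin m → ℝ),
    ∑ i, u i ^ 2 = 1 ∧ ∑ j, v j ^ 2 = 1 ∧ r = ∑ i, ∑ j, u i * A i j * v j}

/-- The second-largest singular value (when `σ₁` has multiplicity 1): the largest
singular value strictly below `σ₁`. -/
def sigma2 {d m : ℕ} (A : Matrix (Fin d) (Fin m) ℝ) : ℝ :=
  sSup {r : ℝ | (∃ i, singularValues A i = r) ∧ r < sigma1 A}

/-- The Euclidean norm on `ℝ^k`. -/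
def enorm2 {k : ℕ} (v : Fin k → ℝ) : ℝ := Real.sqrt (∑ i, v i ^ 2)

/-- Normalization of a vector in the Euclidean norm. -/
def normalize' {k : ℕ} (v : Fin k → ℝ) : Fin k → ℝ := (enorm2 v)⁻¹ • v

/-- Power method iterates: `b₀ = b`, `b_{k+1} = A b_k / ‖A b_k‖₂`. -/
def powerIter {k : ℕ} (A : Matrix (Fin k) (Fin k) ℝ) (b : Fin k → ℝ) : ℕ → Fin k → ℝ
  | 0 => b
  | n + 1 => normalize' (A.mulVec (powerIter A b n))

/-- Rayleigh quotient `vᵀ A v`. -/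
def rayleigh {k : ℕ} (A : Matrix (Fin k) (Fin k) ℝ) (v : Fin k → ℝ) : ℝ :=
  ∑ i, v i * A.mulVec v i

/-- Alternating power iterations producing `v_k`:
`u_{k+1} = A v_k / ‖A v_k‖₂`, `v_{k+1} = Aᵀ u_{k+1} / ‖Aᵀ u_{k+1}‖₂`. -/
def altIter {d m : ℕ} (A : Matrix (Fin d) (Fin m) ℝ) (v0 : Fin m → ℝ) : ℕ → Fin m → ℝ
  | 0 => v0
  | k + 1 => normalize' (Aᵀ.mulVec (normalize' (A.mulVec (altIter A v0 k))))

instance matrixMeasurableSpace {d m : ℕ} : MeasurableSpace (Matrix (Fin d) (Fin m) ℝ) :=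
  inferInstanceAs (MeasurableSpace (Fin d → Fin m → ℝ))

open Pointwise

namespace FWAux

variable {d m : ℕ}

lemma frobInner_eq_sum (A B : Matrix (Fin d) (Fin m) ℝ) :
    frobInner A B = ∑ j, ∑ i, A i j * B i j := by
  simp [frobInner, Matrix.trace, Matrix.diag, Matrix.mul_apply, Matrix.transpose_apply]

lemma frobInner_eq_sum_prod (A B : Matrix (Fin d) (Fin m) ℝ) :
    frobInner A B = ∑ p : Fin m × Fin d, A p.2 p.1 * B p.2 p.1 := by
  rw [frobInner_eq_sum, Fintype.sum_prod_type]

lemma frobInner_comm (A B : Matrix (Fin d) (Fin m) ℝ) : frobInner A B = frobInner B A := by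
  simp [frobInner_eq_sum, mul_comm]

lemma frobInner_sub_left (A B C : Matrix (Fin d) (Fin m) ℝ) :
    frobInner (A - B) C = frobInner A C - frobInner B C := by
  simp [frobInner_eq_sum, Matrix.sub_apply, sub_mul, Finset.sum_sub_distrib]

lemma frobInner_stdBasisMatrix (A : Matrix (Fin d) (Fin m) ℝ) (i : Fin d) (j : Fin m) :
    frobInner A (Matrix.single i j 1) = A i j := by
  rw [frobInner_eq_sum]
  simp [Matrix.single, Matrix.of_apply, mul_ite, ite_and, Finset.sum_ite_eq,
    Finset.sum_ite_eq']

def entryCLM (i : Fin d) (j : Fin m) : Matrix (Fin d) (Fin m) ℝ →L[ℝ] ℝ :=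
  LinearMap.toContinuousLinearMap
    { toFun := fun A => A i j
      map_add' := fun _ _ => rfl
      map_smul' := fun _ _ => rfl }

instance frobContinuousENorm : ContinuousENorm (Matrix (Fin d) (Fin m) ℝ) :=
  SeminormedAddGroup.toContinuousENorm

instance frobOpens : @OpensMeasurableSpace (Matrix (Fin d) (Fin m) ℝ)
    PseudoMetricSpace.toUniformSpace.toTopologicalSpace _ :=
  @BorelSpace.opensMeasurable _ _ _ (inferInstanceAs (BorelSpace (∀ _ : Fin d, ∀ _ : Fin m, ℝ)))

instance frobBorel : BorelSpace (Matrix (Fin d) (Fin m) ℝ) :=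
  inferInstanceAs (BorelSpace (∀ _ : Fin d, ∀ _ : Fin m, ℝ))

instance frobSC : SecondCountableTopology (Matrix (Fin d) (Fin m) ℝ) :=
  inferInstanceAs (SecondCountableTopology (∀ _ : Fin d, ∀ _ : Fin m, ℝ))

instance frobSub : MeasurableSub₂ (Matrix (Fin d) (Fin m) ℝ) :=
  inferInstanceAs (MeasurableSub₂ (∀ _ : Fin d, ∀ _ : Fin m, ℝ))

@[simp] lemma entryCLM_apply (i : Fin d) (j : Fin m) (A : Matrix (Fin d) (Fin m) ℝ) :
    entryCLM i j A = A i j := rfl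

lemma convex_grad_ineq (F : Matrix (Fin d) (Fin m) ℝ → ℝ)
    (hFconv : ConvexOn ℝ Set.univ F) (hFdiff : Differentiable ℝ F)
    (X Y : Matrix (Fin d) (Fin m) ℝ) :
    F X + fderiv ℝ F X (Y - X) ≤ F Y := by
  set V := Y - X with hV
  have hline : HasDerivAt (fun s : ℝ => X + s • V) V 0 := by
    have h := ((hasDerivAt_id (0 : ℝ)).smul_const V).const_add X
    rw [one_smul] at h; exact h
  have hφ : HasDerivAt (fun t : ℝ => F (X + t • V)) (fderiv ℝ F X V) 0 := by
    have h := (hFdiff (X + (0 : ℝ) • V)).hasFDerivAt.comp_hasDerivAt 0 hline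
    rw [zero_smul, add_zero] at h; exact h
  have hconvφ : ConvexOn ℝ Set.univ fun t : ℝ => F (X + t • V) := by
    have h := hFconv.comp_affineMap (AffineMap.lineMap X Y : ℝ →ᵃ[ℝ] Matrix (Fin d) (Fin m) ℝ)
    have heq : (F ∘ (AffineMap.lineMap X Y : ℝ →ᵃ[ℝ] Matrix (Fin d) (Fin m) ℝ))
        = fun t : ℝ => F (X + t • V) := by
      funext t
      simp only [Function.comp, AffineMap.lineMap_apply_module]
      congr 1
      module
    rw [heq] at h
    simpa using h
  have hs := hconvφ.le_slope_of_hasDerivAt (Set.mem_univ (0 : ℝ)) (Set.mem_univ (1 : ℝ))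
    one_pos hφ
  have : fderiv ℝ F X V ≤ F (X + V) - F X := by
    simpa [slope_def_field] using hs
  have hXV : X + V = Y := by rw [hV]; abel
  rw [hXV] at this
  linarith

lemma condexp_matrix_entry {Ω : Type} {mm : MeasurableSpace Ω} [mΩ : MeasurableSpace Ω]
    (P : Measure Ω) [IsFiniteMeasure P] (hm : mm ≤ mΩ)
    (f : Ω → Matrix (Fin d) (Fin m) ℝ) (hf : Integrable f P) (i : Fin d) (j : Fin m) :
    (fun ω => (P[f|mm]) ω i j) =ᵐ[P] P[fun ω => f ω i j|mm] := by
  refine ae_eq_condExp_of_forall_setIntegral_eq hm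
    ((entryCLM i j).integrable_comp hf)
    (fun s hs hμs => ((entryCLM i j).integrable_comp integrable_condExp).integrableOn)
    (fun s hs hμs => ?_)
    ((entryCLM i j).continuous.comp_stronglyMeasurable
      stronglyMeasurable_condExp).aestronglyMeasurable
  have h1 : ∫ x in s, entryCLM i j ((P[f|mm]) x) ∂P
      = entryCLM i j (∫ x in s, (P[f|mm]) x ∂P) :=
    ContinuousLinearMap.integral_comp_comm _ integrable_condExp.restrict
  have h2 : ∫ x in s, entryCLM i j (f x) ∂P = entryCLM i j (∫ x in s, f x ∂P) :=
    ContinuousLinearMap.integral_comp_comm _ hf.restrict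
  simp only [entryCLM_apply] at h1 h2
  rw [h1, setIntegral_condExp hm hf hs, ← h2]

lemma frobInner_eq_sum_prod' (A B : Matrix (Fin d) (Fin m) ℝ) :
    frobInner A B = ∑ p : Fin m × Fin d, B p.2 p.1 * A p.2 p.1 := by
  rw [frobInner_eq_sum_prod]; exact Finset.sum_congr rfl fun p _ => mul_comm _ _

lemma integrable_frobInner_of_bound {Ω : Type} [mΩ : MeasurableSpace Ω]
    (P : Measure Ω) [IsProbabilityMeasure P]
    (A G : Ω → Matrix (Fin d) (Fin m) ℝ) (hA : Measurable A)
    (RA : ℝ) (hRA : ∀ ω, ‖A ω‖ ≤ RA)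
    (hGmeas : ∀ i j, Measurable fun ω => G ω i j)
    (BG : ℝ) (hBG : ∀ ω i j, |G ω i j| ≤ BG) :
    Integrable (fun ω => frobInner (A ω) (G ω)) P := by
  haveI : BorelSpace (Matrix (Fin d) (Fin m) ℝ) :=
    inferInstanceAs (BorelSpace (∀ _ : Fin d, ∀ _ : Fin m, ℝ))
  have hAint : Integrable A P :=
    ⟨hA.aestronglyMeasurable, HasFiniteIntegral.of_bounded (ae_of_all _ hRA)⟩
  simp only [frobInner_eq_sum_prod']
  apply integrable_finset_sum
  intro p _
  exact ((entryCLM p.2 p.1).integrable_comp hAint).bdd_mul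
    ((hGmeas p.2 p.1).aestronglyMeasurable)
    (c := BG) (ae_of_all _ fun ω => by simpa [Real.norm_eq_abs] using hBG ω p.2 p.1)

lemma integrable_frobInner_condexp {Ω : Type} {mm : MeasurableSpace Ω} [mΩ : MeasurableSpace Ω]
    (P : Measure Ω) [IsProbabilityMeasure P] (hm : mm ≤ mΩ)
    (S G : Ω → Matrix (Fin d) (Fin m) ℝ) (hS : Measurable S)
    (RS : ℝ) (hRS : ∀ ω, ‖S ω‖ ≤ RS)
    (hGmeas : ∀ i j, Measurable fun ω => G ω i j)
    (BG : ℝ) (hBG : ∀ ω i j, |G ω i j| ≤ BG) :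
    Integrable (fun ω => frobInner ((P[S|mm]) ω) (G ω)) P := by
  haveI : BorelSpace (Matrix (Fin d) (Fin m) ℝ) :=
    inferInstanceAs (BorelSpace (∀ _ : Fin d, ∀ _ : Fin m, ℝ))
  simp only [frobInner_eq_sum_prod']
  apply integrable_finset_sum
  intro p _
  exact ((entryCLM p.2 p.1).integrable_comp integrable_condExp).bdd_mul
    ((hGmeas p.2 p.1).aestronglyMeasurable)
    (c := BG) (ae_of_all _ fun ω => by simpa [Real.norm_eq_abs] using hBG ω p.2 p.1)

lemma integral_frobInner_condexp {Ω : Type} {mm : MeasurableSpace Ω} [mΩ : MeasurableSpace Ω]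
    (P : Measure Ω) [IsProbabilityMeasure P] (hm : mm ≤ mΩ)
    (S G : Ω → Matrix (Fin d) (Fin m) ℝ) (hS : Measurable S)
    (RS : ℝ) (hRS : ∀ ω, ‖S ω‖ ≤ RS)
    (hGmeas : ∀ i j, Measurable[mm] fun ω => G ω i j)
    (BG : ℝ) (hBG : ∀ ω i j, |G ω i j| ≤ BG) :
    ∫ ω, frobInner ((P[S|mm]) ω) (G ω) ∂P = ∫ ω, frobInner (S ω) (G ω) ∂P := by
  haveI : BorelSpace (Matrix (Fin d) (Fin m) ℝ) :=
    inferInstanceAs (BorelSpace (∀ _ : Fin d, ∀ _ : Fin m, ℝ))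
  have hGmeas' : ∀ i j, Measurable fun ω => G ω i j := fun i j => (hGmeas i j).mono hm le_rfl
  have hSint : Integrable S P :=
    ⟨hS.aestronglyMeasurable, HasFiniteIntegral.of_bounded (ae_of_all _ hRS)⟩
  have hint1 : ∀ p : Fin m × Fin d,
      Integrable (fun ω => G ω p.2 p.1 * (P[S|mm]) ω p.2 p.1) P := fun p =>
    ((entryCLM p.2 p.1).integrable_comp integrable_condExp).bdd_mul
      ((hGmeas' p.2 p.1).aestronglyMeasurable)
      (c := BG) (ae_of_all _ fun ω => by simpa [Real.norm_eq_abs] using hBG ω p.2 p.1)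
  have hint2 : ∀ p : Fin m × Fin d,
      Integrable (fun ω => G ω p.2 p.1 * S ω p.2 p.1) P := fun p =>
    ((entryCLM p.2 p.1).integrable_comp hSint).bdd_mul
      ((hGmeas' p.2 p.1).aestronglyMeasurable)
      (c := BG) (ae_of_all _ fun ω => by simpa [Real.norm_eq_abs] using hBG ω p.2 p.1)
  have key : ∀ p : Fin m × Fin d,
      ∫ ω, G ω p.2 p.1 * (P[S|mm]) ω p.2 p.1 ∂P = ∫ ω, G ω p.2 p.1 * S ω p.2 p.1 ∂P := by
    intro p
    set gg : Ω → ℝ := fun ω => G ω p.2 p.1 with hggdef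
    set ss : Ω → ℝ := fun ω => S ω p.2 p.1 with hssdef
    have hgm : StronglyMeasurable[mm] gg := (hGmeas p.2 p.1).stronglyMeasurable
    have hssint : Integrable ss P := (entryCLM p.2 p.1).integrable_comp hSint
    have hmulint : Integrable (gg * ss) P := hint2 p
    have hpull := condExp_mul_of_stronglyMeasurable_left hgm hmulint hssint
    have hentry := condexp_matrix_entry (d := d) (m := m) P hm S hSint p.2 p.1
    calc ∫ ω, gg ω * (P[S|mm]) ω p.2 p.1 ∂P
        = ∫ ω, gg ω * (P[ss|mm]) ω ∂P := by
          refine integral_congr_ae (hentry.mono fun ω hω => ?_)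
          simp only at hω ⊢
          rw [hω]
      _ = ∫ ω, (P[gg * ss|mm]) ω ∂P := by
          refine (integral_congr_ae (hpull.mono fun ω hω => ?_)).symm
          simp only [Pi.mul_apply] at hω ⊢
          rw [hω]
      _ = ∫ ω, (gg * ss) ω ∂P := integral_condExp hm
      _ = ∫ ω, gg ω * ss ω ∂P := rfl
  calc ∫ ω, frobInner ((P[S|mm]) ω) (G ω) ∂P
      = ∑ p : Fin m × Fin d, ∫ ω, G ω p.2 p.1 * (P[S|mm]) ω p.2 p.1 ∂P := by
        simp_rw [frobInner_eq_sum_prod']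
        exact integral_finset_sum _ fun p _ => hint1 p
    _ = ∑ p : Fin m × Fin d, ∫ ω, G ω p.2 p.1 * S ω p.2 p.1 ∂P :=
        Finset.sum_congr rfl fun p _ => key p
    _ = ∫ ω, frobInner (S ω) (G ω) ∂P := by
        simp_rw [frobInner_eq_sum_prod']
        exact (integral_finset_sum _ fun p _ => hint2 p).symm

end FWAux

/-- Sublinear convergence in expectation of the Frank–Wolfe algorithm whose
linear subproblem is solved approximately in expectation by a randomized oracle. -/
theorem frank_wolfe_approx_oracle_convergence_in_expectation {d m : ℕ}
    (D : Set (Matrix (Fin d) (Fin m) ℝ))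
    (hDne : D.Nonempty) (hDcp : IsCompact D) (hDcv : Convex ℝ D)
    (F : Matrix (Fin d) (Fin m) ℝ → ℝ)
    (gradF : Matrix (Fin d) (Fin m) ℝ → Matrix (Fin d) (Fin m) ℝ)
    (hFconv : ConvexOn ℝ Set.univ F)
    (hFdiff : Differentiable ℝ F)
    (hgrad : ∀ W Δ, fderiv ℝ F W Δ = frobInner (gradF W) Δ)
    (C_F : ℝ) (hC : 0 ≤ C_F) (hcurv : IsCurvatureBound F gradF D C_F)
    (δ : ℝ) (hδ : 0 ≤ δ)
    {Ω : Type} [MeasurableSpace Ω] (P : Measure Ω) [IsProbabilityMeasure P]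
    (W Shat : ℕ → Ω → Matrix (Fin d) (Fin m) ℝ)
    (hWmeas : ∀ t, Measurable (W t)) (hShatmeas : ∀ t, Measurable (Shat t))
    (W0 : Matrix (Fin d) (Fin m) ℝ) (hW0D : W0 ∈ D) (hW0 : ∀ ω, W 0 ω = W0)
    (hWD : ∀ t ω, W t ω ∈ D) (hShatD : ∀ t ω, Shat t ω ∈ D)
    (hrec : ∀ (t : ℕ) (ω : Ω), W (t + 1) ω =
      W t ω + (2 / ((t : ℝ) + 2)) • (Shat t ω - W t ω))
    (horacle : ∀ t : ℕ, ∀ᵐ ω ∂P,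
      frobInner ((P[Shat t | MeasurableSpace.comap (W t) matrixMeasurableSpace]) ω)
          (gradF (W t ω))
        ≤ sInf ((fun S => frobInner S (gradF (W t ω))) '' D)
            + 1 / 2 * δ * (2 / ((t : ℝ) + 2)) * C_F)
    (Wstar : Matrix (Fin d) (Fin m) ℝ) (hWstarD : Wstar ∈ D)
    (hWstarmin : ∀ V ∈ D, F Wstar ≤ F V) :
    ∀ t : ℕ, 1 ≤ t →
      (∫ ω, F (W t ω) ∂P) - F Wstar ≤ 2 * C_F / ((t : ℝ) + 2) * (1 + δ) := by
  haveI hBorel : BorelSpace (Matrix (Fin d) (Fin m) ℝ) :=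
    inferInstanceAs (BorelSpace (∀ _ : Fin d, ∀ _ : Fin m, ℝ))
  have hγmem : ∀ t : ℕ, (2 / ((t : ℝ) + 2)) ∈ Set.Icc (0 : ℝ) 1 := by
    intro t
    have h2 : (0 : ℝ) < (t : ℝ) + 2 := by positivity
    refine ⟨by positivity, ?_⟩
    rw [div_le_one h2]
    have : (0 : ℝ) ≤ (t : ℝ) := Nat.cast_nonneg t
    linarith
  have hγpos : ∀ t : ℕ, (0 : ℝ) < 2 / ((t : ℝ) + 2) := by
    intro t; have : (0 : ℝ) < (t : ℝ) + 2 := by positivity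
    positivity
  -- bound on |F| over K = D + closedBall 0 1
  have hKcp : IsCompact (D + Metric.closedBall (0 : Matrix (Fin d) (Fin m) ℝ) 1) :=
    hDcp.add (isCompact_closedBall 0 1)
  obtain ⟨M, hM⟩ := hKcp.exists_bound_of_continuousOn hFdiff.continuous.continuousOn
  have hDK : ∀ x ∈ D, x ∈ D + Metric.closedBall (0 : Matrix (Fin d) (Fin m) ℝ) 1 := by
    intro x hx
    have h0 : (0 : Matrix (Fin d) (Fin m) ℝ) ∈ Metric.closedBall 0 1 :=
      Metric.mem_closedBall_self (by norm_num)
    simpa using Set.add_mem_add hx h0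
  have hMD : ∀ x ∈ D, |F x| ≤ M := fun x hx => by
    simpa [Real.norm_eq_abs] using hM x (hDK x hx)
  have hfd_le : ∀ X ∈ D, ∀ Δ : Matrix (Fin d) (Fin m) ℝ, ‖Δ‖ ≤ 1 →
      fderiv ℝ F X Δ ≤ 2 * M := by
    intro X hX Δ hΔ
    have h1 : F X + fderiv ℝ F X ((X + Δ) - X) ≤ F (X + Δ) :=
      FWAux.convex_grad_ineq F hFconv hFdiff X (X + Δ)
    have h2 : X + Δ ∈ D + Metric.closedBall (0 : Matrix (Fin d) (Fin m) ℝ) 1 :=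
      Set.add_mem_add hX (by simpa [Metric.mem_closedBall, dist_zero_right] using hΔ)
    have h3 : |F (X + Δ)| ≤ M := by simpa [Real.norm_eq_abs] using hM _ h2
    have h4 : |F X| ≤ M := hMD X hX
    have h5 : (X + Δ) - X = Δ := by abel
    rw [h5] at h1
    have h6 := abs_le.mp h3
    have h7 := abs_le.mp h4
    linarith [h6.1, h6.2, h7.1, h7.2]
  have hEnorm : ∀ (i : Fin d) (j : Fin m), ‖(Matrix.single i j (1 : ℝ))‖ ≤ 1 := by
    intro i j
    rw [Matrix.frobenius_norm_def]
    have hsum : ∑ i', ∑ j', ‖Matrix.single i j (1 : ℝ) i' j'‖ ^ (2 : ℝ) = 1 := by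
      simp [Matrix.single, Matrix.of_apply, apply_ite, ite_and,
        Real.zero_rpow, Finset.sum_ite_eq]
    rw [hsum]
    norm_num
  have hgradBound : ∀ X ∈ D, ∀ (i : Fin d) (j : Fin m), |gradF X i j| ≤ 2 * M := by
    intro X hX i j
    have heq : gradF X i j = fderiv ℝ F X (Matrix.single i j 1) := by
      rw [hgrad, FWAux.frobInner_stdBasisMatrix]
    have hneg : ‖(-(Matrix.single i j (1 : ℝ)))‖ ≤ 1 := by
      simpa using hEnorm i j
    have h1 := hfd_le X hX _ (hEnorm i j)
    have h2 := hfd_le X hX _ hneg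
    rw [map_neg] at h2
    rw [heq, abs_le]
    constructor <;> linarith
  obtain ⟨R, hRpos, hR⟩ := hDcp.isBounded.exists_pos_norm_le
  have hFmeas : Measurable F := hFdiff.continuous.measurable
  have hgA : ∀ (i : Fin d) (j : Fin m),
      Measurable fun A : Matrix (Fin d) (Fin m) ℝ => gradF A i j := by
    intro i j
    have heq : (fun A : Matrix (Fin d) (Fin m) ℝ => gradF A i j)
        = fun A => fderiv ℝ F A (Matrix.single i j 1) := by
      funext A; rw [hgrad, FWAux.frobInner_stdBasisMatrix]
    rw [heq]
    exact measurable_fderiv_apply_const ℝ F _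
  have hFWint : ∀ t, Integrable (fun ω => F (W t ω)) P := fun t =>
    ⟨(hFmeas.comp (hWmeas t)).aestronglyMeasurable,
      HasFiniteIntegral.of_bounded (ae_of_all _ fun ω => by
        simpa [Real.norm_eq_abs] using hMD _ (hWD t ω))⟩
  have hGmeasW : ∀ t (i : Fin d) (j : Fin m), Measurable fun ω => gradF (W t ω) i j :=
    fun t i j => (hgA i j).comp (hWmeas t)
  have hGbnd : ∀ t (ω : Ω) (i : Fin d) (j : Fin m), |gradF (W t ω) i j| ≤ 2 * M :=
    fun t ω i j => hgradBound _ (hWD t ω) i j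
  have hintSG : ∀ t, Integrable (fun ω => frobInner (Shat t ω) (gradF (W t ω))) P := fun t =>
    FWAux.integrable_frobInner_of_bound P _ _ (hShatmeas t) R
      (fun ω => hR _ (hShatD t ω)) (hGmeasW t) (2 * M) (hGbnd t)
  have hintWG : ∀ t, Integrable (fun ω => frobInner (W t ω) (gradF (W t ω))) P := fun t =>
    FWAux.integrable_frobInner_of_bound P _ _ (hWmeas t) R
      (fun ω => hR _ (hWD t ω)) (hGmeasW t) (2 * M) (hGbnd t)
  have hintXG : ∀ t, Integrable (fun ω => frobInner (Shat t ω - W t ω) (gradF (W t ω))) P := by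
    intro t
    refine FWAux.integrable_frobInner_of_bound P _ _ ((hShatmeas t).sub (hWmeas t)) (R + R)
      (fun ω => ?_) (hGmeasW t) (2 * M) (hGbnd t)
    calc ‖Shat t ω - W t ω‖ ≤ ‖Shat t ω‖ + ‖W t ω‖ := norm_sub_le _ _
      _ ≤ R + R := add_le_add (hR _ (hShatD t ω)) (hR _ (hWD t ω))
  have hintCG : ∀ t, Integrable (fun ω =>
      frobInner ((P[Shat t | MeasurableSpace.comap (W t) matrixMeasurableSpace]) ω)
        (gradF (W t ω))) P := fun t =>
    FWAux.integrable_frobInner_condexp P ((hWmeas t).comap_le) _ _ (hShatmeas t) R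
      (fun ω => hR _ (hShatD t ω)) (hGmeasW t) (2 * M) (hGbnd t)
  have hXle : ∀ t : ℕ, ∫ ω, frobInner (Shat t ω - W t ω) (gradF (W t ω)) ∂P
      ≤ (F Wstar - ∫ ω, F (W t ω) ∂P) + 1 / 2 * δ * (2 / ((t : ℝ) + 2)) * C_F := by
    intro t
    have hmle : MeasurableSpace.comap (W t) matrixMeasurableSpace ≤ _ := (hWmeas t).comap_le
    have hGm : ∀ (i : Fin d) (j : Fin m),
        Measurable[MeasurableSpace.comap (W t) matrixMeasurableSpace]
          fun ω => gradF (W t ω) i j :=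
      fun i j => (hgA i j).comp (measurable_iff_comap_le.mpr le_rfl)
    have hswap := FWAux.integral_frobInner_condexp P hmle (Shat t)
      (fun ω => gradF (W t ω)) (hShatmeas t) R (fun ω => hR _ (hShatD t ω)) hGm
      (2 * M) (hGbnd t)
    have hae : ∀ᵐ ω ∂P,
        frobInner ((P[Shat t | MeasurableSpace.comap (W t) matrixMeasurableSpace]) ω)
            (gradF (W t ω)) - frobInner (W t ω) (gradF (W t ω))
          ≤ (F Wstar + 1 / 2 * δ * (2 / ((t : ℝ) + 2)) * C_F) - F (W t ω) := by
      filter_upwards [horacle t] with ω hω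
      have hcont : Continuous fun S : Matrix (Fin d) (Fin m) ℝ =>
          frobInner S (gradF (W t ω)) := by
        have heq : (fun S : Matrix (Fin d) (Fin m) ℝ => frobInner S (gradF (W t ω)))
            = fun S => ∑ j, ∑ i, S i j * gradF (W t ω) i j :=
          funext fun S => FWAux.frobInner_eq_sum _ _
        rw [heq]
        exact continuous_finset_sum _ fun j _ => continuous_finset_sum _ fun i _ =>
          (FWAux.entryCLM i j).continuous.mul continuous_const
      have hbdd : BddBelow ((fun S => frobInner S (gradF (W t ω))) '' D) :=
        (hDcp.image hcont).bddBelow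
      have hsinf : sInf ((fun S => frobInner S (gradF (W t ω))) '' D)
          ≤ frobInner Wstar (gradF (W t ω)) := csInf_le hbdd ⟨Wstar, hWstarD, rfl⟩
      have hgi : frobInner Wstar (gradF (W t ω)) - frobInner (W t ω) (gradF (W t ω))
          ≤ F Wstar - F (W t ω) := by
        have h := FWAux.convex_grad_ineq F hFconv hFdiff (W t ω) Wstar
        rw [hgrad] at h
        have h2 : frobInner (gradF (W t ω)) (Wstar - W t ω)
            = frobInner Wstar (gradF (W t ω)) - frobInner (W t ω) (gradF (W t ω)) := by
          rw [FWAux.frobInner_comm, FWAux.frobInner_sub_left]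
        linarith [h, h2.ge, h2.le]
      linarith
    calc ∫ ω, frobInner (Shat t ω - W t ω) (gradF (W t ω)) ∂P
        = ∫ ω, frobInner (Shat t ω) (gradF (W t ω)) ∂P
            - ∫ ω, frobInner (W t ω) (gradF (W t ω)) ∂P := by
          simp_rw [FWAux.frobInner_sub_left]
          exact integral_sub (hintSG t) (hintWG t)
      _ = ∫ ω, frobInner ((P[Shat t | MeasurableSpace.comap (W t)
              matrixMeasurableSpace]) ω) (gradF (W t ω)) ∂P
            - ∫ ω, frobInner (W t ω) (gradF (W t ω)) ∂P := by rw [hswap]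
      _ = ∫ ω, (frobInner ((P[Shat t | MeasurableSpace.comap (W t)
              matrixMeasurableSpace]) ω) (gradF (W t ω))
            - frobInner (W t ω) (gradF (W t ω))) ∂P :=
          (integral_sub (hintCG t) (hintWG t)).symm
      _ ≤ ∫ ω, ((F Wstar + 1 / 2 * δ * (2 / ((t : ℝ) + 2)) * C_F) - F (W t ω)) ∂P :=
          integral_mono_ae ((hintCG t).sub (hintWG t))
            ((integrable_const _).sub (hFWint t)) hae
      _ = (F Wstar - ∫ ω, F (W t ω) ∂P) + 1 / 2 * δ * (2 / ((t : ℝ) + 2)) * C_F := by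
          rw [integral_sub (integrable_const _) (hFWint t), integral_const]
          simp only [probReal_univ, measure_univ, ENNReal.toReal_one, smul_eq_mul, one_mul]
          ring
  have hstep : ∀ t : ℕ,
      (∫ ω, F (W (t + 1) ω) ∂P) - F Wstar
        ≤ (1 - 2 / ((t : ℝ) + 2)) * ((∫ ω, F (W t ω) ∂P) - F Wstar)
          + (2 / ((t : ℝ) + 2)) ^ 2 / 2 * ((1 + δ) * C_F) := by
    intro t
    have hpt : ∀ ω, F (W (t + 1) ω) ≤ F (W t ω)
        + (2 / ((t : ℝ) + 2)) * frobInner (Shat t ω - W t ω) (gradF (W t ω))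
        + (2 / ((t : ℝ) + 2)) ^ 2 / 2 * C_F := by
      intro ω
      rw [hrec t ω]
      exact hcurv _ (hWD t ω) _ (hShatD t ω) _ (hγmem t)
    have hint1 : (∫ ω, F (W (t + 1) ω) ∂P)
        ≤ ∫ ω, (F (W t ω)
            + (2 / ((t : ℝ) + 2)) * frobInner (Shat t ω - W t ω) (gradF (W t ω))
            + (2 / ((t : ℝ) + 2)) ^ 2 / 2 * C_F) ∂P :=
      integral_mono (hFWint (t + 1))
        (((hFWint t).add ((hintXG t).const_mul _)).add (integrable_const _)) hpt
    have e : ∫ ω, (F (W t ω)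
        + (2 / ((t : ℝ) + 2)) * frobInner (Shat t ω - W t ω) (gradF (W t ω))
        + (2 / ((t : ℝ) + 2)) ^ 2 / 2 * C_F) ∂P
        = (∫ ω, F (W t ω) ∂P)
          + (2 / ((t : ℝ) + 2)) * ∫ ω, frobInner (Shat t ω - W t ω) (gradF (W t ω)) ∂P
          + (2 / ((t : ℝ) + 2)) ^ 2 / 2 * C_F := by
      rw [integral_add, integral_add, integral_const_mul, integral_const]
      · simp [measure_univ]
      · exact hFWint t
      · exact (hintXG t).const_mul _
      · exact (hFWint t).add ((hintXG t).const_mul _)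
      · exact integrable_const _
    rw [e] at hint1
    have hmul := mul_le_mul_of_nonneg_left (hXle t) (le_of_lt (hγpos t))
    nlinarith [hmul, hint1]
  intro t ht
  induction t with
  | zero => exact absurd ht (by norm_num)
  | succ n ih =>
    rcases Nat.eq_zero_or_pos n with hn | hn
    · subst hn
      have h := hstep 0
      norm_num at h ⊢
      nlinarith [h, hC, hδ, mul_nonneg hC hδ]
    · have ihn := ih hn
      have h := hstep n
      have hs0 : (0 : ℝ) ≤ (n : ℝ) := Nat.cast_nonneg n
      have hs2 : (0 : ℝ) < (n : ℝ) + 2 := by positivity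
      have hs3 : (0 : ℝ) < (n : ℝ) + 3 := by positivity
      have h1 : 1 - 2 / ((n : ℝ) + 2) = (n : ℝ) / ((n : ℝ) + 2) := by
        field_simp
        ring
      have hmono := mul_le_mul_of_nonneg_left ihn (div_nonneg hs0 hs2.le)
      have hfin : (n : ℝ) / ((n : ℝ) + 2) * (2 * C_F / ((n : ℝ) + 2) * (1 + δ))
          + (2 / ((n : ℝ) + 2)) ^ 2 / 2 * ((1 + δ) * C_F)
          ≤ 2 * C_F / ((n : ℝ) + 3) * (1 + δ) := by
        have expand : (n : ℝ) / ((n : ℝ) + 2) * (2 * C_F / ((n : ℝ) + 2) * (1 + δ))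
            + (2 / ((n : ℝ) + 2)) ^ 2 / 2 * ((1 + δ) * C_F)
            = (2 * C_F * (1 + δ)) * ((n : ℝ) + 1) / ((n : ℝ) + 2) ^ 2 := by
          field_simp
        have hrhs : 2 * C_F / ((n : ℝ) + 3) * (1 + δ)
            = (2 * C_F * (1 + δ)) / ((n : ℝ) + 3) := by ring
        rw [expand, hrhs, div_le_div_iff₀ (by positivity) hs3]
        have hnn : (0 : ℝ) ≤ 2 * C_F * (1 + δ) := by nlinarith
        nlinarith [hnn, hs0]
      have hcast : ((n + 1 : ℕ) : ℝ) + 2 = (n : ℝ) + 3 := by push_cast; ring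
      rw [hcast]
      calc (∫ ω, F (W (n + 1) ω) ∂P) - F Wstar
          ≤ (1 - 2 / ((n : ℝ) + 2)) * ((∫ ω, F (W n ω) ∂P) - F Wstar)
            + (2 / ((n : ℝ) + 2)) ^ 2 / 2 * ((1 + δ) * C_F) := h
        _ ≤ (n : ℝ) / ((n : ℝ) + 2) * (2 * C_F / ((n : ℝ) + 2) * (1 + δ))
            + (2 / ((n : ℝ) + 2)) ^ 2 / 2 * ((1 + δ) * C_F) := by
            rw [h1]; linarith [hmono]
        _ ≤ 2 * C_F / ((n : ℝ) + 3) * (1 + δ) := hfin
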